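/- Let A ∈ ℂ^{n×n×n×n} be a CPS tensor with rank_M(A) = m, and let A = Σ_{i=1}^m λ_i E_i∘conj(E_i) be a decomposition attaining this minimum, with λ_i ∈ ℝ and E_i ∈ ℂ^{n×n} symmetric. Set r = max_{1≤i≤m} rank(E_i). Then rank_M(A) ≤ rank_CP(A) ≤ r²·rank_M(A). -/

import Mathlib

open scoped BigOperators

/-- A fourth-order complex tensor is conjugate partial-symmetric (CPS). -/
def IsCPS {n : ℕ} (A : Fin n → Fin n → Fin n → Fin n → ℂ) : Prop :=
  ∀ i j k l, A i j k l = A j i k l ∧ A i j k l = A i j l k ∧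
    A i j k l = starRingEnd ℂ (A k l i j)


-- helper 1: rank subadditive
lemma myRankAddLe {N : Type*} [Fintype N] [DecidableEq N] (A B : Matrix N N ℂ) :
    (A + B).rank ≤ A.rank + B.rank := by
  classical
  have h : LinearMap.range (A + B).mulVecLin ≤
      LinearMap.range A.mulVecLin ⊔ LinearMap.range B.mulVecLin := by
    rw [Matrix.mulVecLin_add]
    rintro x ⟨y, rfl⟩
    exact Submodule.mem_sup.2 ⟨A.mulVecLin y, ⟨y, rfl⟩, B.mulVecLin y, ⟨y, rfl⟩, rfl⟩
  calc (A + B).rank ≤ Module.finrank ℂ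
        (LinearMap.range A.mulVecLin ⊔ LinearMap.range B.mulVecLin : Submodule ℂ (N → ℂ)) :=
        Submodule.finrank_mono h
    _ ≤ A.rank + B.rank := Submodule.finrank_add_le_finrank_add_finrank _ _

lemma myRankSumLe {N ι : Type*} [Fintype N] [DecidableEq N] (s : Finset ι)
    (f : ι → Matrix N N ℂ) : (∑ t ∈ s, f t).rank ≤ ∑ t ∈ s, (f t).rank := by
  classical
  induction s using Finset.induction with
  | empty => simp [Matrix.rank_zero]
  | insert _ _ h ih =>
      rw [Finset.sum_insert h, Finset.sum_insert h]
      exact (myRankAddLe _ _).trans (add_le_add_right ih _)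

lemma myFactor {n r : ℕ} (B : Matrix (Fin n) (Fin n) ℂ) (h : B.rank ≤ r) :
    ∃ u v : Fin r → Fin n → ℂ, ∀ i j, B i j = ∑ s, u s i * v s j := by
  classical
  set V := LinearMap.range B.mulVecLin with hV
  have hd : Module.finrank ℂ V = B.rank := rfl
  let b : Module.Basis (Fin (Module.finrank ℂ V)) ℂ V := Module.finBasis ℂ V
  have hcol : ∀ j : Fin n, (fun i => B i j) ∈ V := by
    intro j
    refine ⟨Pi.single j 1, ?_⟩
    ext i
    simp [Matrix.mulVecLin_apply, Matrix.mulVec_single]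
  let col : Fin n → V := fun j => ⟨fun i => B i j, hcol j⟩
  have hdr : Module.finrank ℂ V ≤ r := hd ▸ h
  refine ⟨fun s i => if hs : (s : ℕ) < Module.finrank ℂ V then (b ⟨s, hs⟩ : Fin n → ℂ) i else 0,
    fun s j => if hs : (s : ℕ) < Module.finrank ℂ V then b.repr (col j) ⟨s, hs⟩ else 0, ?_⟩
  intro i j
  have hrepr : B i j = ∑ s, b.repr (col j) s * (b s : Fin n → ℂ) i := by
    have h1 : (col j : Fin n → ℂ) i = B i j := rfl
    rw [← h1]
    conv_lhs => rw [← b.sum_repr (col j)]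
    have h2 : ((∑ s, b.repr (col j) s • b s : V) : Fin n → ℂ)
        = ∑ s, b.repr (col j) s • (b s : Fin n → ℂ) := by
      push_cast [Submodule.coe_sum]
      simp
    rw [h2]
    simp [Finset.sum_apply]
  rw [hrepr]
  set F : ℕ → ℂ := fun k =>
    if hs : k < Module.finrank ℂ V then b.repr (col j) ⟨k, hs⟩ * (b ⟨k, hs⟩ : Fin n → ℂ) i
    else 0 with hF
  have hL : ∑ s, b.repr (col j) s * (b s : Fin n → ℂ) i = ∑ k ∈ Finset.range (Module.finrank ℂ V), F k := by
    rw [← Fin.sum_univ_eq_sum_range F]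
    refine Finset.sum_congr rfl fun s _ => ?_
    simp [hF, s.isLt]
  have hR : ∑ s : Fin r,
      (if hs : (s : ℕ) < Module.finrank ℂ V then (b ⟨s, hs⟩ : Fin n → ℂ) i else 0) *
      (if hs : (s : ℕ) < Module.finrank ℂ V then b.repr (col j) ⟨s, hs⟩ else 0)
      = ∑ k ∈ Finset.range r, F k := by
    rw [← Fin.sum_univ_eq_sum_range F]
    refine Finset.sum_congr rfl fun s _ => ?_
    by_cases hs : (s : ℕ) < Module.finrank ℂ V
    · simp only [hF, dif_pos hs]; ring
    · simp [hF, hs]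
  rw [hL, hR]
  refine Finset.sum_subset (Finset.range_subset_range.2 hdr) fun k _ hk => ?_
  have : ¬ (k < Module.finrank ℂ V) := by simpa using hk
  simp [hF, this]


lemma myCPtoM {n R : ℕ} (A : Fin n → Fin n → Fin n → Fin n → ℂ) (hA : IsCPS A)
    (a b c d : Fin R → Fin n → ℂ)
    (hd : ∀ i j k l, A i j k l = ∑ t, a t i * b t j * c t k * d t l) :
    ∃ (lam : Fin R → ℝ) (E : Fin R → Matrix (Fin n) (Fin n) ℂ),
      (∀ t, (E t).IsSymm) ∧
      ∀ i j k l, A i j k l =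
        ∑ t, (lam t : ℂ) * E t i j * starRingEnd ℂ (E t k l) := by
  classical
  set M : Matrix (Fin n × Fin n) (Fin n × Fin n) ℂ :=
    Matrix.of (fun p q => A p.1 p.2 q.1 q.2) with hMdef
  have hM : M.IsHermitian := by
    ext p q
    simp only [Matrix.conjTranspose_apply, hMdef, Matrix.of_apply]
    rw [(hA q.1 q.2 p.1 p.2).2.2]
    exact Complex.conj_conj _
  -- rank M ≤ R
  have hrankM : M.rank ≤ R := by
    have hMsum : M = ∑ t : Fin R,
        (Matrix.of fun (p : Fin n × Fin n) (_ : Fin 1) => a t p.1 * b t p.2) *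
        (Matrix.of fun (_ : Fin 1) (q : Fin n × Fin n) => c t q.1 * d t q.2) := by
      ext p q
      simp only [Matrix.sum_apply, Matrix.mul_apply, Matrix.of_apply, hMdef,
        Finset.univ_unique, Finset.sum_singleton]
      rw [hd]
      exact Finset.sum_congr rfl fun t _ => by ring
    calc M.rank ≤ ∑ t : Fin R, ((Matrix.of fun (p : Fin n × Fin n) (_ : Fin 1) => a t p.1 * b t p.2) *
          (Matrix.of fun (_ : Fin 1) (q : Fin n × Fin n) => c t q.1 * d t q.2)).rank := by
          rw [hMsum]; exact myRankSumLe _ _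
      _ ≤ ∑ _t : Fin R, 1 := Finset.sum_le_sum fun t _ =>
          (Matrix.rank_mul_le_left _ _).trans ((Matrix.rank_le_card_width _).trans (by simp))
      _ = R := by simp
  have hcard : Fintype.card {i : Fin n × Fin n // hM.eigenvalues i ≠ 0} ≤ Fintype.card (Fin R) := by
    rw [← hM.rank_eq_card_non_zero_eigs]
    simpa using hrankM
  obtain ⟨f⟩ := Function.Embedding.nonempty_of_card_le hcard
  set u : (Fin n × Fin n) → (Fin n × Fin n) → ℂ := fun i p => hM.eigenvectorBasis i p with hu
  have hspec : ∀ p q : Fin n × Fin n,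
      M p q = ∑ i, (hM.eigenvalues i : ℂ) * u i p * starRingEnd ℂ (u i q) := by
    intro p q
    conv_lhs => rw [hM.spectral_theorem, Unitary.conjStarAlgAut_apply]
    rw [Matrix.mul_apply]
    refine Finset.sum_congr rfl fun i _ => ?_
    rw [Matrix.mul_diagonal]
    simp only [Matrix.star_apply, Matrix.IsHermitian.eigenvectorUnitary_apply, hu,
      Function.comp_apply, RCLike.star_def]
    exact congrArg (· * (starRingEnd ℂ) (hM.eigenvectorBasis i q))
      (mul_comm (hM.eigenvectorBasis i p) (((hM.eigenvalues i : ℝ)) : ℂ))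
  have hsymmvec : ∀ i, hM.eigenvalues i ≠ 0 → ∀ j k : Fin n, u i (j, k) = u i (k, j) := by
    intro i hev j k
    have hmv := hM.mulVec_eigenvectorBasis i
    have h1 : ∀ p : Fin n × Fin n, u i p = (hM.eigenvalues i : ℂ)⁻¹ * ∑ q, M p q * u i q := by
      intro p
      have h3 : (∑ q, M p q * u i q) = (hM.eigenvalues i : ℂ) * u i p := by
        simpa [Matrix.mulVec, dotProduct, hu, Complex.real_smul] using congrFun hmv p
      rw [h3, inv_mul_cancel_left₀ (by exact_mod_cast hev)]
    rw [h1 (j, k), h1 (k, j)]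
    congr 1
    refine Finset.sum_congr rfl fun q _ => ?_
    have hjk : M (j, k) q = M (k, j) q := by
      simpa only [hMdef, Matrix.of_apply] using (hA j k q.1 q.2).1.symm ▸ rfl
    rw [hjk]
  set lam' : Fin R → ℝ := fun s =>
    if h : ∃ i, f i = s then hM.eigenvalues (Classical.choose h).1 else 0 with hlam'
  set E' : Fin R → Matrix (Fin n) (Fin n) ℂ := fun s =>
    if h : ∃ i, f i = s then Matrix.of (fun j k => u (Classical.choose h).1 (j, k)) else 0
    with hE'
  refine ⟨lam', E', ?_, ?_⟩
  · intro t
    by_cases h : ∃ i, f i = t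
    · have hev := (Classical.choose h).2
      show Matrix.transpose (E' t) = E' t
      ext j k
      simp only [hE', dif_pos h, Matrix.transpose_apply, Matrix.of_apply]
      exact hsymmvec _ hev k j
    · show Matrix.transpose (E' t) = E' t
      rw [show E' t = 0 from dif_neg h]
      simp
  · intro i j k l
    have hAM : A i j k l = M (i, j) (k, l) := rfl
    rw [hAM, hspec]
    set term : (Fin n × Fin n) → ℂ := fun i' =>
      (hM.eigenvalues i' : ℂ) * u i' (i, j) * starRingEnd ℂ (u i' (k, l)) with hterm
    set g : Fin R → ℂ := fun t => (lam' t : ℂ) * E' t i j * starRingEnd ℂ (E' t k l) with hg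
    have step1 : ∑ i' : Fin n × Fin n, term i'
        = ∑ i' ∈ Finset.univ.filter (fun i' => hM.eigenvalues i' ≠ 0), term i' := by
      refine (Finset.sum_subset (Finset.filter_subset _ _) fun x _ hx => ?_).symm
      have : hM.eigenvalues x = 0 := by simpa using hx
      simp [hterm, this]
    have step2 : ∑ i' ∈ Finset.univ.filter (fun i' => hM.eigenvalues i' ≠ 0), term i'
        = ∑ x : {i' : Fin n × Fin n // hM.eigenvalues i' ≠ 0}, term x.1 := by
      exact Finset.sum_subtype _ (by simp) term
    have step3 : ∑ t : Fin R, g t = ∑ t ∈ Finset.univ.map f, g t := by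
      refine (Finset.sum_subset (Finset.subset_univ _) fun t _ ht => ?_).symm
      have h : ¬ ∃ i, f i = t := by
        intro ⟨i, hi⟩
        exact ht (Finset.mem_map.2 ⟨i, Finset.mem_univ _, hi⟩)
      have h0 : lam' t = 0 := dif_neg h
      simp [hg, h0]
    have step4 : ∑ t ∈ Finset.univ.map f, g t
        = ∑ x : {i' : Fin n × Fin n // hM.eigenvalues i' ≠ 0}, g (f x) := by
      rw [Finset.sum_map]
    have step5 : ∀ x : {i' : Fin n × Fin n // hM.eigenvalues i' ≠ 0}, g (f x) = term x.1 := by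
      intro x
      have h : ∃ i, f i = f x := ⟨x, rfl⟩
      have hch : Classical.choose h = x := f.injective (Classical.choose_spec h)
      simp only [hg, hlam', hE', dif_pos h, hch, Matrix.of_apply, hterm]
    rw [step1, step2, step3, step4]
    exact (Finset.sum_congr rfl fun x _ => (step5 x)).symm


/-- `rank_M(A)`: the smallest length of a decomposition
`A = Σ λ_t E_t ∘ conj(E_t)` with real `λ_t` and symmetric matrices `E_t`. -/
noncomputable def rankM {n : ℕ} (A : Fin n → Fin n → Fin n → Fin n → ℂ) : ℕ :=
  sInf {r : ℕ | ∃ (lam : Fin r → ℝ) (E : Fin r → Matrix (Fin n) (Fin n) ℂ),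
    (∀ t, (E t).IsSymm) ∧
    ∀ i j k l, A i j k l =
      ∑ t, (lam t : ℂ) * E t i j * starRingEnd ℂ (E t k l)}

/-- The CP rank of a fourth-order complex tensor. -/
noncomputable def rankCP {n : ℕ} (A : Fin n → Fin n → Fin n → Fin n → ℂ) : ℕ :=
  sInf {R : ℕ | ∃ a b c d : Fin R → Fin n → ℂ,
    ∀ i j k l, A i j k l = ∑ t, a t i * b t j * c t k * d t l}

/-- `rank_M(A) ≤ rank_CP(A) ≤ r² rank_M(A)`, where `r` is the maximal matrix
rank of the factors in a minimal matrix outer product decomposition of `A`. -/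
theorem rankM_le_rankCP_le {n m : ℕ}
    (A : Fin n → Fin n → Fin n → Fin n → ℂ) (hA : IsCPS A)
    (lam : Fin m → ℝ) (E : Fin m → Matrix (Fin n) (Fin n) ℂ)
    (hEsym : ∀ t, (E t).IsSymm)
    (hdec : ∀ i j k l, A i j k l =
      ∑ t, (lam t : ℂ) * E t i j * starRingEnd ℂ (E t k l))
    (hmin : rankM A = m)
    (r : ℕ) (hr : r = Finset.univ.sup fun t => (E t).rank) :
    rankM A ≤ rankCP A ∧ rankCP A ≤ r ^ 2 * rankM A := by
  classical
  have hrank_t : ∀ t, (E t).rank ≤ r := fun t => hr ▸ Finset.le_sup (f := fun t => (E t).rank) (Finset.mem_univ t)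
  choose u v huv using fun t => myFactor (E t) (hrank_t t)
  have hcardeq : Fintype.card (Fin m × Fin r × Fin r) = r ^ 2 * m := by simp; ring
  let e : (Fin m × Fin r × Fin r) ≃ Fin (r ^ 2 * m) := Fintype.equivFinOfCardEq hcardeq
  have hmem2 : (r ^ 2 * m) ∈ {R : ℕ | ∃ a b c d : Fin R → Fin n → ℂ,
      ∀ i j k l, A i j k l = ∑ t, a t i * b t j * c t k * d t l} := by
    refine ⟨fun s i => (lam (e.symm s).1 : ℂ) * u (e.symm s).1 (e.symm s).2.1 i,
      fun s j => v (e.symm s).1 (e.symm s).2.1 j,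
      fun s k => starRingEnd ℂ (u (e.symm s).1 (e.symm s).2.2 k),
      fun s l => starRingEnd ℂ (v (e.symm s).1 (e.symm s).2.2 l), ?_⟩
    intro i j k l
    rw [hdec]
    rw [← Equiv.sum_comp e (fun s =>
      ((lam (e.symm s).1 : ℂ) * u (e.symm s).1 (e.symm s).2.1 i) *
      v (e.symm s).1 (e.symm s).2.1 j *
      starRingEnd ℂ (u (e.symm s).1 (e.symm s).2.2 k) *
      starRingEnd ℂ (v (e.symm s).1 (e.symm s).2.2 l))]
    simp only [Equiv.symm_apply_apply]
    rw [Fintype.sum_prod_type]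
    refine Finset.sum_congr rfl fun t _ => ?_
    have key : (lam t : ℂ) * E t i j * starRingEnd ℂ (E t k l)
        = ∑ p : Fin r, ∑ q : Fin r, (lam t : ℂ) * u t p i * v t p j *
            starRingEnd ℂ (u t q k) * starRingEnd ℂ (v t q l) := by
      rw [huv t i j, huv t k l, map_sum, Finset.mul_sum, Finset.mul_sum]
      rw [Finset.sum_comm]
      refine Finset.sum_congr rfl fun q _ => ?_
      rw [Finset.sum_mul]
      refine Finset.sum_congr rfl fun p _ => ?_
      rw [map_mul]
      ring
    rw [key, Fintype.sum_prod_type]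
  have h2 : rankCP A ≤ r ^ 2 * m := Nat.sInf_le hmem2
  have hne : {R : ℕ | ∃ a b c d : Fin R → Fin n → ℂ,
      ∀ i j k l, A i j k l = ∑ t, a t i * b t j * c t k * d t l}.Nonempty := ⟨_, hmem2⟩
  obtain ⟨a, b, c, d, hcp⟩ := Nat.sInf_mem hne
  obtain ⟨lam2, E2, hsym2, hdec2⟩ := myCPtoM A hA a b c d hcp
  refine ⟨Nat.sInf_le ⟨lam2, E2, hsym2, hdec2⟩, ?_⟩
  rw [hmin]
  exact h2
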